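/- Explicit spectrogram densities for a one-dimensional Gaussian wave packet: Let ε > 0, w ∈ ℝ², N ≥ 1, and define h : ℝ² → ℝ by h(z) = (2πε)^{−1} e^{−|z−w|²/(2ε)} (the Husimi function of the Gaussian wave packet centered at w). Then for every z ∈ ℝ², Σ_{m=0}^{N−1} (1/m!) (−ε/4)^m Δ^m h(z) = (2πε)^{−1} e^{−|z−w|²/(2ε)} · Σ_{j=0}^{N−1} (−1)^j ( (|z−w|²/(2ε))^j / j! ) · Σ_{m=j}^{N−1} 2^{−m} binom(m, j), where Δ is the Laplacian on ℝ². -/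

import Mathlib

open Finset

noncomputable section

/-- The Laplacian `∂²/∂q² + ∂²/∂p²` on `ℝ²`. -/
def lap2 (f : ℝ × ℝ → ℝ) : ℝ × ℝ → ℝ := fun z =>
  iteratedDeriv 2 (fun t => f (t, z.2)) z.1 + iteratedDeriv 2 (fun t => f (z.1, t)) z.2

/-- The Husimi function of the Gaussian wave packet centered at `w ∈ ℝ²`:
`h(z) = (2πε)^{−1} e^{−|z−w|²/(2ε)}`. -/
def husimiGauss (ε : ℝ) (w : ℝ × ℝ) : ℝ × ℝ → ℝ := fun z =>
  (2 * Real.pi * ε)⁻¹ *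
    Real.exp (-((z.1 - w.1) ^ 2 + (z.2 - w.2) ^ 2) / (2 * ε))

/-! ### Auxiliary combinatorics -/

lemma key_nat (m n : ℕ) :
    (n+2) * Nat.choose m (n+2) + (2*n+3) * Nat.choose m (n+1) + (n+1) * Nat.choose m n
      = (m+1) * Nat.choose (m+1) (n+1) := by
  induction m generalizing n with
  | zero => rcases n with _|n <;> simp [Nat.choose]
  | succ m ih =>
    rcases n with _|n
    · have h := ih 0
      simp only [Nat.choose_succ_succ, Nat.choose_zero_right, Nat.choose_one_right,
        zero_add, Nat.zero_add, mul_zero, Nat.mul_zero] at *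
      zify at h ⊢
      linear_combination h
    · have h1 := ih (n+1)
      have h2 := ih n
      simp only [Nat.choose_succ_succ, Nat.choose_zero_right, Nat.choose_one_right] at *
      zify at h1 h2 ⊢
      linear_combination h1 + h2

/-! ### The Laguerre-type polynomials -/

def Qpoly (m : ℕ) : Polynomial ℝ :=
  ∑ j ∈ Finset.range (m+1),
    Polynomial.C ((-1)^j * (m.choose j : ℝ) / (j.factorial : ℝ)) * Polynomial.X ^ j

lemma Qpoly_coeff (m n : ℕ) :
    (Qpoly m).coeff n = (-1)^n * (m.choose n : ℝ) / (n.factorial : ℝ) := by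
  rw [Qpoly, Polynomial.finset_sum_coeff]
  simp only [Polynomial.coeff_C_mul, Polynomial.coeff_X_pow, mul_ite, mul_one, mul_zero]
  rw [Finset.sum_ite_eq (Finset.range (m+1)) n]
  split_ifs with h
  · rfl
  · rw [Finset.mem_range, not_lt] at h
    rw [Nat.choose_eq_zero_of_lt (by omega)]
    simp

lemma Qpoly_eval (m : ℕ) (t : ℝ) :
    (Qpoly m).eval t
      = ∑ j ∈ Finset.range (m+1), (-1)^j * (m.choose j : ℝ) / (j.factorial : ℝ) * t^j := by
  simp [Qpoly, Polynomial.eval_finset_sum]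

lemma Qpoly_rec (m : ℕ) :
    Polynomial.X * (((Qpoly m).derivative - Qpoly m).derivative - ((Qpoly m).derivative - Qpoly m))
      + ((Qpoly m).derivative - Qpoly m) = (-((m:ℝ)+1)) • Qpoly (m+1) := by
  ext n
  rcases n with _|n
  · simp only [Polynomial.coeff_add, Polynomial.mul_coeff_zero, Polynomial.coeff_X_zero,
      zero_mul, Polynomial.coeff_sub, Polynomial.coeff_derivative, Polynomial.coeff_smul,
      Qpoly_coeff, zero_add, smul_eq_mul]
    simp [Nat.choose_one_right, Nat.factorial]
    ring
  · have h : ((n:ℝ) + 2) * m.choose (n + 2) + (2 * n + 3) * m.choose (n + 1) + (n + 1) * m.choose n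
      = ((m:ℝ) + 1) * (m + 1).choose (n + 1) := by exact_mod_cast key_nat m n
    simp only [Polynomial.coeff_add, Polynomial.coeff_X_mul, Polynomial.coeff_sub,
      Polynomial.coeff_derivative, Polynomial.coeff_smul, Qpoly_coeff, smul_eq_mul]
    have h1 : (((n+1).factorial : ℝ))⁻¹ * ((n:ℝ)+1) = ((n.factorial : ℝ))⁻¹ := by
      rw [Nat.factorial_succ]; push_cast; rw [mul_inv]; field_simp
    have h2 : (((n+2).factorial : ℝ))⁻¹ * ((n:ℝ)+2) = (((n+1).factorial : ℝ))⁻¹ := by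
      have h' : (n+2).factorial = (n+2) * (n+1).factorial := rfl
      rw [h']; push_cast; rw [mul_inv]
      have : ((n:ℝ)+2) ≠ 0 := by positivity
      field_simp
    simp only [show n+1+1 = n+2 from rfl, div_eq_mul_inv]
    push_cast
    linear_combination ((-1:ℝ)^n * (((n+1).factorial : ℝ))⁻¹) * h
      - ((-1:ℝ)^n * (m.choose n : ℝ)) * h1
      + ((-1:ℝ)^n * (m.choose (n+2) : ℝ) * ((n:ℝ)+2)) * h2

/-! ### Analysis: derivatives of `p(u) e^{-u}` -/

def Gfun (p : Polynomial ℝ) (t : ℝ) : ℝ := p.eval t * Real.exp (-t)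

lemma Gfun_hasDerivAt (p : Polynomial ℝ) (t : ℝ) :
    HasDerivAt (Gfun p) (Gfun (p.derivative - p) t) t := by
  have h1 := p.hasDerivAt t
  have h2 : HasDerivAt (fun s : ℝ => Real.exp (-s)) (Real.exp (-t) * (-1)) t :=
    HasDerivAt.exp (hasDerivAt_neg t)
  have := h1.mul h2
  refine this.congr_deriv ?_
  simp [Gfun, Polynomial.eval_sub]
  ring

lemma V_hasDerivAt (ε a c x : ℝ) (hε : ε ≠ 0) :
    HasDerivAt (fun x : ℝ => ((x-a)^2 + c)/(2*ε)) ((x-a)/ε) x := by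
  have h : HasDerivAt (fun x : ℝ => ((x-a)^2 + c)) (2*(x-a)) x := by
    have := (((hasDerivAt_id x).sub_const a).pow 2).add_const c
    simpa using this
  have := h.div_const (2*ε)
  refine this.congr_deriv ?_
  field_simp

lemma deriv1 (ε a c : ℝ) (hε : ε ≠ 0) (p : Polynomial ℝ) (x : ℝ) :
    HasDerivAt (fun x : ℝ => Gfun p (((x-a)^2 + c)/(2*ε)))
      (Gfun (p.derivative - p) (((x-a)^2 + c)/(2*ε)) * ((x-a)/ε)) x :=
  (Gfun_hasDerivAt p _).comp x (V_hasDerivAt ε a c x hε)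

lemma iteratedDeriv_two_G (ε a c : ℝ) (hε : ε ≠ 0) (p : Polynomial ℝ) (x : ℝ) :
    iteratedDeriv 2 (fun x : ℝ => Gfun p (((x-a)^2 + c)/(2*ε))) x
      = Gfun ((p.derivative - p).derivative - (p.derivative - p)) (((x-a)^2 + c)/(2*ε))
          * ((x-a)/ε)^2
        + Gfun (p.derivative - p) (((x-a)^2 + c)/(2*ε)) * ε⁻¹ := by
  rw [show (2:ℕ) = 1 + 1 from rfl, iteratedDeriv_succ, iteratedDeriv_one]
  have hd : deriv (fun x : ℝ => Gfun p (((x-a)^2 + c)/(2*ε)))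
      = fun x : ℝ => Gfun (p.derivative - p) (((x-a)^2 + c)/(2*ε)) * ((x-a)/ε) := by
    funext y
    exact (deriv1 ε a c hε p y).deriv
  rw [hd]
  have h2 : HasDerivAt (fun x : ℝ => Gfun (p.derivative - p) (((x-a)^2 + c)/(2*ε)) * ((x-a)/ε))
      (Gfun ((p.derivative - p).derivative - (p.derivative - p)) (((x-a)^2 + c)/(2*ε))
         * ((x-a)/ε) * ((x-a)/ε)
       + Gfun (p.derivative - p) (((x-a)^2 + c)/(2*ε)) * (1/ε)) x := by
    have ha : HasDerivAt (fun x : ℝ => (x-a)/ε) (1/ε) x := by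
      simpa using ((hasDerivAt_id x).sub_const a).div_const ε
    exact (deriv1 ε a c hε (p.derivative - p) x).mul ha
  rw [h2.deriv]
  ring

def Hfun (ε : ℝ) (w : ℝ × ℝ) (p : Polynomial ℝ) : ℝ × ℝ → ℝ :=
  fun z => Gfun p (((z.1 - w.1)^2 + (z.2 - w.2)^2)/(2*ε))

lemma lap2_Hfun (ε : ℝ) (hε : ε ≠ 0) (w : ℝ × ℝ) (p : Polynomial ℝ) :
    lap2 (Hfun ε w p) = Hfun ε w (Polynomial.C (2/ε) *
      (Polynomial.X * ((p.derivative - p).derivative - (p.derivative - p))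
        + (p.derivative - p))) := by
  funext z
  have e2 : (fun t : ℝ => Gfun p (((z.1 - w.1)^2 + (t - w.2)^2)/(2*ε)))
      = fun t : ℝ => Gfun p (((t - w.2)^2 + (z.1 - w.1)^2)/(2*ε)) := by
    funext t; rw [add_comm]
  simp only [lap2, Hfun]
  rw [e2, iteratedDeriv_two_G ε w.1 ((z.2-w.2)^2) hε p z.1,
    iteratedDeriv_two_G ε w.2 ((z.1-w.1)^2) hε p z.2]
  rw [show (z.2 - w.2)^2 + (z.1 - w.1)^2 = (z.1 - w.1)^2 + (z.2 - w.2)^2 from add_comm _ _]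
  simp only [Gfun, Polynomial.eval_mul, Polynomial.eval_add, Polynomial.eval_C,
    Polynomial.eval_X]
  field_simp
  ring

/-! ### Scaled polynomials and the main induction -/

def Rpoly (ε : ℝ) (m : ℕ) : Polynomial ℝ :=
  ((2 * Real.pi * ε)⁻¹ * (-2/ε)^m * (m.factorial : ℝ)) • Qpoly m

lemma Rpoly_step (ε : ℝ) (hε : ε ≠ 0) (m : ℕ) :
    Polynomial.C (2/ε) *
      (Polynomial.X * (((Rpoly ε m).derivative - Rpoly ε m).derivative
          - ((Rpoly ε m).derivative - Rpoly ε m))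
        + ((Rpoly ε m).derivative - Rpoly ε m)) = Rpoly ε (m+1) := by
  set c : ℝ := (2 * Real.pi * ε)⁻¹ * (-2/ε)^m * (m.factorial : ℝ) with hc
  have hd : (Rpoly ε m).derivative - Rpoly ε m = c • ((Qpoly m).derivative - Qpoly m) := by
    rw [Rpoly, ← hc, Polynomial.derivative_smul, smul_sub]
  rw [hd, Polynomial.derivative_smul, ← smul_sub, mul_smul_comm, ← smul_add]
  rw [Qpoly_rec m, ← Polynomial.smul_eq_C_mul, smul_smul, smul_smul, Rpoly]
  congr 1
  rw [hc]
  have hpi : Real.pi ≠ 0 := Real.pi_ne_zero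
  push_cast [pow_succ, Nat.factorial_succ]
  field_simp

lemma iterate_lap2 (ε : ℝ) (hε : 0 < ε) (w : ℝ × ℝ) (m : ℕ) :
    lap2^[m] (husimiGauss ε w) = Hfun ε w (Rpoly ε m) := by
  induction m with
  | zero =>
    funext z
    simp [husimiGauss, Hfun, Rpoly, Qpoly, Gfun, neg_div]
    exact Or.inl (by ring)
  | succ m ih =>
    rw [Function.iterate_succ_apply', ih, lap2_Hfun ε (ne_of_gt hε) w,
      Rpoly_step ε (ne_of_gt hε)]

/-! ### The main theorem -/

theorem spectrogram_density_gaussian_wavepacket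
    (ε : ℝ) (hε : 0 < ε) (w : ℝ × ℝ) (N : ℕ) (hN : 1 ≤ N) (z : ℝ × ℝ) :
    ∑ m ∈ Finset.range N,
        ((Nat.factorial m : ℝ))⁻¹ * (-ε / 4) ^ m * (lap2^[m] (husimiGauss ε w)) z =
      (2 * Real.pi * ε)⁻¹ *
        Real.exp (-((z.1 - w.1) ^ 2 + (z.2 - w.2) ^ 2) / (2 * ε)) *
        ∑ j ∈ Finset.range N,
          (-1 : ℝ) ^ j *
            ((((z.1 - w.1) ^ 2 + (z.2 - w.2) ^ 2) / (2 * ε)) ^ j /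
              (Nat.factorial j : ℝ)) *
            ∑ m ∈ Finset.Icc j (N - 1), ((2 : ℝ) ^ m)⁻¹ * (m.choose j : ℝ) := by
  have hεne : ε ≠ 0 := ne_of_gt hε
  set S : ℝ := (z.1 - w.1) ^ 2 + (z.2 - w.2) ^ 2 with hS
  set u : ℝ := S / (2 * ε) with hu
  -- rewrite the iterated Laplacians
  have hrw : ∀ m : ℕ, (lap2^[m] (husimiGauss ε w)) z
      = (2 * Real.pi * ε)⁻¹ * (-2/ε)^m * (m.factorial : ℝ)
          * ((∑ j ∈ Finset.range (m+1),
              (-1)^j * (m.choose j : ℝ) / (j.factorial : ℝ) * u^j) * Real.exp (-u)) := by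
    intro m
    rw [iterate_lap2 ε hε w m]
    simp only [Hfun, Rpoly, Gfun, Polynomial.eval_smul, smul_eq_mul, Qpoly_eval]
    rw [← hS, ← hu]
    ring
  simp only [hrw]
  -- per-term coefficient simplification
  have hcoef : ∀ m : ℕ, ((m.factorial : ℝ))⁻¹ * (-ε/4)^m
      * ((2 * Real.pi * ε)⁻¹ * (-2/ε)^m * (m.factorial : ℝ))
      = (2 * Real.pi * ε)⁻¹ * ((2:ℝ)^m)⁻¹ := by
    intro m
    have hf : ((m.factorial : ℝ)) ≠ 0 := Nat.cast_ne_zero.2 m.factorial_ne_zero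
    have hp : (-ε/4)^m * (-2/ε)^m = ((2:ℝ)^m)⁻¹ := by
      rw [← mul_pow, ← inv_pow]
      congr 1
      field_simp
      ring
    calc ((m.factorial : ℝ))⁻¹ * (-ε/4)^m
        * ((2 * Real.pi * ε)⁻¹ * (-2/ε)^m * (m.factorial : ℝ))
        = (2 * Real.pi * ε)⁻¹ * ((-ε/4)^m * (-2/ε)^m)
            * (((m.factorial : ℝ))⁻¹ * (m.factorial : ℝ)) := by ring
      _ = (2 * Real.pi * ε)⁻¹ * ((2:ℝ)^m)⁻¹ := by
          rw [hp, inv_mul_cancel₀ hf, mul_one]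
  -- the sum interchange
  have hswap : ∑ m ∈ Finset.range N, ((2:ℝ)^m)⁻¹
        * ∑ j ∈ Finset.range (m+1), (-1)^j * (m.choose j : ℝ) / (j.factorial : ℝ) * u^j
      = ∑ j ∈ Finset.range N, (-1:ℝ)^j * (u^j / (j.factorial : ℝ))
          * ∑ m ∈ Finset.Icc j (N-1), ((2:ℝ)^m)⁻¹ * (m.choose j : ℝ) := by
    have h1 : ∀ m ∈ Finset.range N,
        ((2:ℝ)^m)⁻¹ * ∑ j ∈ Finset.range (m+1),
            (-1)^j * (m.choose j : ℝ) / (j.factorial : ℝ) * u^j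
          = ∑ j ∈ Finset.range N, ((2:ℝ)^m)⁻¹
              * ((-1)^j * (m.choose j : ℝ) / (j.factorial : ℝ) * u^j) := by
      intro m hm
      rw [Finset.mul_sum]
      apply Finset.sum_subset
      · intro x hx
        rw [Finset.mem_range] at *
        omega
      · intro x hx hnx
        rw [Finset.mem_range, not_lt] at hnx
        rw [Nat.choose_eq_zero_of_lt (by omega)]
        simp
    rw [Finset.sum_congr rfl h1, Finset.sum_comm]
    apply Finset.sum_congr rfl
    intro j hj
    rw [Finset.mem_range] at hj
    have h2 : ∑ m ∈ Finset.Icc j (N-1), ((2:ℝ)^m)⁻¹ * (m.choose j : ℝ)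
        = ∑ m ∈ Finset.range N, ((2:ℝ)^m)⁻¹ * (m.choose j : ℝ) := by
      apply Finset.sum_subset
      · intro x hx
        rw [Finset.mem_Icc] at hx
        rw [Finset.mem_range]
        omega
      · intro x hx hnx
        rw [Finset.mem_range] at hx
        rw [Finset.mem_Icc, not_and_or] at hnx
        have : x < j := by omega
        rw [Nat.choose_eq_zero_of_lt this]
        simp
    rw [h2, Finset.mul_sum]
    exact Finset.sum_congr rfl (fun m _ => by ring)
  calc ∑ m ∈ Finset.range N, ((m.factorial : ℝ))⁻¹ * (-ε/4)^m
        * ((2 * Real.pi * ε)⁻¹ * (-2/ε)^m * (m.factorial : ℝ)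
          * ((∑ j ∈ Finset.range (m+1),
              (-1)^j * (m.choose j : ℝ) / (j.factorial : ℝ) * u^j) * Real.exp (-u)))
      = (2 * Real.pi * ε)⁻¹ * Real.exp (-u)
        * ∑ m ∈ Finset.range N, ((2:ℝ)^m)⁻¹
            * ∑ j ∈ Finset.range (m+1),
                (-1)^j * (m.choose j : ℝ) / (j.factorial : ℝ) * u^j := by
        rw [Finset.mul_sum]
        apply Finset.sum_congr rfl
        intro m hm
        have := hcoef m
        calc ((m.factorial : ℝ))⁻¹ * (-ε/4)^m
              * ((2 * Real.pi * ε)⁻¹ * (-2/ε)^m * (m.factorial : ℝ)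
                * ((∑ j ∈ Finset.range (m+1),
                    (-1)^j * (m.choose j : ℝ) / (j.factorial : ℝ) * u^j) * Real.exp (-u)))
            = (((m.factorial : ℝ))⁻¹ * (-ε/4)^m
                * ((2 * Real.pi * ε)⁻¹ * (-2/ε)^m * (m.factorial : ℝ)))
              * ((∑ j ∈ Finset.range (m+1),
                  (-1)^j * (m.choose j : ℝ) / (j.factorial : ℝ) * u^j) * Real.exp (-u)) := by
              ring
          _ = _ := by rw [this]; ring
    _ = _ := by
        rw [hswap, neg_div]
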